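/- For λ ≥ 0, the function r ↦ (r-λ)³(r+λ) - 4, restricted to r ≤ 0, has a root if and only if λ ≥ 2√2/3^{3/4}; moreover, as a function of the parametrization r = -x/2 + 2/x³, λ = x/2 + 2/x³ (x ≥ √2), the minimum of λ over x > 0 of x/2 + 2/x³ equals 2√2/3^{3/4} and is attained at x = √(2√3). -/
import Mathlib

private lemma aux_x0_pow4 : (Real.sqrt (2*Real.sqrt 3))^4 = 12 := by
  have h3 : Real.sqrt 3 ^ 2 = 3 := Real.sq_sqrt (by norm_num)
  have h2 : (Real.sqrt (2*Real.sqrt 3))^2 = 2*Real.sqrt 3 := Real.sq_sqrt (by positivity)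
  nlinarith [h2, h3]

private lemma aux_A_eq : 2*Real.sqrt 2 / (3:ℝ) ^ ((3:ℝ)/4) = 2 * Real.sqrt (2*Real.sqrt 3) / 3 := by
  have h3 : Real.sqrt 3 ^ 2 = 3 := Real.sq_sqrt (by norm_num)
  set t := (3:ℝ) ^ ((3:ℝ)/4) with ht
  have htpos : 0 < t := Real.rpow_pos_of_pos (by norm_num) _
  have ht2 : t^2 = 3 * Real.sqrt 3 := by
    have e1 : t^2 = (Real.sqrt 3)^3 := by
      rw [ht, ← Real.rpow_natCast ((3:ℝ)^((3:ℝ)/4)) 2, ← Real.rpow_mul (by norm_num),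
        Real.sqrt_eq_rpow, ← Real.rpow_natCast ((3:ℝ)^((1:ℝ)/2)) 3,
        ← Real.rpow_mul (by norm_num)]
      norm_num
    rw [e1]; nlinarith [h3]
  set x0 := Real.sqrt (2*Real.sqrt 3) with hx0
  have hx0pos : 0 < x0 := Real.sqrt_pos.mpr (by positivity)
  have hx02 : x0^2 = 2*Real.sqrt 3 := Real.sq_sqrt (by positivity)
  have h2 : Real.sqrt 2 ^ 2 = 2 := Real.sq_sqrt (by norm_num)
  have key : 3 * Real.sqrt 2 = x0 * t := by
    have hsq : (3*Real.sqrt 2)^2 = (x0*t)^2 := by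
      rw [mul_pow, mul_pow, hx02, ht2]; nlinarith [h2, h3]
    nlinarith [hsq, mul_pos hx0pos htpos, Real.sqrt_nonneg 2]
  field_simp
  nlinarith [key, htpos]

private lemma aux_min (x : ℝ) (hx : 0 < x) :
    2 * Real.sqrt (2*Real.sqrt 3) / 3 ≤ x/2 + 2/x^3 := by
  set x0 := Real.sqrt (2*Real.sqrt 3) with hx0
  have hx0pos : 0 < x0 := Real.sqrt_pos.mpr (by positivity)
  have h4 : x0^4 = 12 := aux_x0_pow4
  have key : x^4 - (4/3)*x0*x^3 + 4 = (x - x0)^2 * (x^2 + (2/3)*x0*x + x0^2/3) := by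
    linear_combination (-(1:ℝ)/3) * h4
  have h5 : x/2 + 2/x^3 - 2*x0/3 = (x^4 - (4/3)*x0*x^3 + 4)/(2*x^3) := by
    field_simp; ring
  have : 0 ≤ x/2 + 2/x^3 - 2*x0/3 := by
    rw [h5, key]; positivity
  linarith

theorem stmt_15 (l : ℝ) (hl : 0 ≤ l) :
    ((∃ r : ℝ, r ≤ 0 ∧ (r - l)^3*(r + l) + 4 = 0) ↔
      2*Real.sqrt 2 / (3:ℝ) ^ ((3:ℝ)/4) ≤ l) ∧
    (∀ x : ℝ, 0 < x → 2*Real.sqrt 2 / (3:ℝ) ^ ((3:ℝ)/4) ≤ x/2 + 2/x^3) ∧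
    (Real.sqrt (2*Real.sqrt 3)/2 + 2/(Real.sqrt (2*Real.sqrt 3))^3
      = 2*Real.sqrt 2 / (3:ℝ) ^ ((3:ℝ)/4)) := by
  set x0 := Real.sqrt (2*Real.sqrt 3) with hx0
  have hx0pos : 0 < x0 := Real.sqrt_pos.mpr (by positivity)
  have h4 : x0^4 = 12 := aux_x0_pow4
  rw [aux_A_eq]
  refine ⟨⟨?_, ?_⟩, fun x hx => aux_min x hx, ?_⟩
  · -- forward
    rintro ⟨r, hr, heq⟩
    have hupos : 0 < l - r := by
      rcases eq_or_lt_of_le (sub_nonneg.mpr (le_trans hr hl)) with h | h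
      · exfalso
        have hrl : r = l := by linarith
        rw [hrl] at heq
        norm_num at heq
      · exact h
    have hl_eq : l = (l - r)/2 + 2/(l - r)^3 := by
      field_simp
      linear_combination -heq
    rw [hl_eq]
    exact aux_min _ hupos
  · -- backward: IVT
    intro hA
    set f : ℝ → ℝ := fun x => x/2 + 2/x^3 with hf
    set M : ℝ := max x0 (2*l) with hM
    have hx0M : x0 ≤ M := le_max_left _ _
    have hcont : ContinuousOn f (Set.Icc x0 M) := by
      apply ContinuousOn.add (by fun_prop)
      apply ContinuousOn.div continuousOn_const (by fun_prop)
      intro y hy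
      have : 0 < y := lt_of_lt_of_le hx0pos hy.1
      positivity
    have hfx0 : f x0 = 2*x0/3 := by
      show x0/2 + 2/x0^3 = 2*x0/3
      field_simp
      nlinarith [h4]
    have hfM : l ≤ f M := by
      show l ≤ M/2 + 2/M^3
      have hMpos : 0 < M := lt_of_lt_of_le hx0pos hx0M
      have h1 : l ≤ M/2 := by
        have : 2*l ≤ M := le_max_right _ _
        linarith
      have : 0 < 2/M^3 := by positivity
      linarith
    have hivt : l ∈ Set.Icc (f x0) (f M) := ⟨by rw [hfx0]; linarith [hA], hfM⟩
    obtain ⟨x, hxmem, hfx⟩ := intermediate_value_Icc hx0M hcont hivt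
    have hxpos : 0 < x := lt_of_lt_of_le hx0pos hxmem.1
    have hx4 : 4 ≤ x^4 := by
      have := pow_le_pow_left₀ hx0pos.le hxmem.1 4
      linarith [h4 ▸ this]
    refine ⟨-x/2 + 2/x^3, ?_, ?_⟩
    · have : 2/x^3 ≤ x/2 := by
        rw [div_le_div_iff₀ (by positivity) (by norm_num)]
        nlinarith [hx4]
      linarith
    · have hlx : l = x/2 + 2/x^3 := hfx.symm
      have hsub : (-x/2 + 2/x^3) - l = -x := by rw [hlx]; ring
      have hadd : (-x/2 + 2/x^3) + l = 4/x^3 := by rw [hlx]; ring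
      rw [hsub, hadd]
      field_simp
      ring
  · -- equality at x0
    show x0/2 + 2/x0^3 = 2*x0/3
    field_simp
    nlinarith [h4]
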